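/- Let a > 0, σ ≠ 0, f ≠ 0, b ≠ 0 be real numbers, set r = sqrt(a² + f²b²/σ²) and γ* = σ²(r − a)/f². Let γ₀ ≥ 0 with γ₀ ≠ γ*, and define γ(t) = e^{−2rt}·[1/(γ₀ − γ*) + (f²/(2rσ²))(1 − e^{−2rt})]⁻¹ + γ*. Then there exists a constant C > 0 such that |γ(t) − γ*| ≤ C·e^{−2rt} for all t ≥ 0; in particular γ(t) → γ* as t → ∞. -/

import Mathlib

/-- Exponential convergence of the Riccati solution to its steady state:
`|γ(t) − γ*| ≤ C e^{−2rt}` and hence `γ(t) → γ*` as `t → ∞`. -/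
theorem riccati_exponential_convergence
    (a σ f b : ℝ) (ha : 0 < a) (hσ : σ ≠ 0) (hf : f ≠ 0) (hb : b ≠ 0)
    (r γs : ℝ)
    (hr : r = Real.sqrt (a ^ 2 + f ^ 2 * b ^ 2 / σ ^ 2))
    (hγs : γs = σ ^ 2 * (r - a) / f ^ 2)
    (γ₀ : ℝ) (hγ₀ : 0 ≤ γ₀) (hne : γ₀ ≠ γs)
    (γ : ℝ → ℝ)
    (hγ : ∀ t : ℝ, γ t =
      Real.exp (-2 * r * t) *
        (1 / (γ₀ - γs) + f ^ 2 / (2 * r * σ ^ 2) * (1 - Real.exp (-2 * r * t)))⁻¹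
      + γs) :
    (∃ C : ℝ, 0 < C ∧ ∀ t : ℝ, 0 ≤ t → |γ t - γs| ≤ C * Real.exp (-2 * r * t)) ∧
    Filter.Tendsto γ Filter.atTop (nhds γs) := by
  have hσ2 : (0:ℝ) < σ ^ 2 := by positivity
  have hf2 : (0:ℝ) < f ^ 2 := by positivity
  have hra : a < r := by
    have h1 : a = Real.sqrt (a ^ 2) := by rw [Real.sqrt_sq ha.le]
    rw [hr]
    nth_rewrite 1 [h1]
    apply Real.sqrt_lt_sqrt (by positivity)
    have : (0:ℝ) < f ^ 2 * b ^ 2 / σ ^ 2 := by positivity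
    linarith
  have hr0 : 0 < r := ha.trans hra
  set k : ℝ := f ^ 2 / (2 * r * σ ^ 2) with hk
  have hk0 : 0 < k := by positivity
  have hγs0 : 0 < γs := by
    rw [hγs]
    apply div_pos (mul_pos hσ2 (by linarith)) hf2
  have hγsk : γs * k < 1 := by
    have h1 : γs * k = (r - a) / (2 * r) := by
      rw [hγs, hk]; field_simp
    rw [h1, div_lt_one (by linarith)]
    linarith
  -- uniform lower bound on |denominator|
  have key : ∃ m : ℝ, 0 < m ∧ ∀ t : ℝ, 0 ≤ t →
      m ≤ |1 / (γ₀ - γs) + k * (1 - Real.exp (-2 * r * t))| := by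
    rcases lt_or_gt_of_ne hne with h | h
    · -- γ₀ < γs
      have hδ : 0 < γs - γ₀ := by linarith
      have hu : 1 / (γ₀ - γs) = -(1 / (γs - γ₀)) := by
        rw [← one_div_neg_eq_neg_one_div]; ring_nf
      have hk' : k < 1 / (γs - γ₀) := by
        rw [lt_div_iff₀ hδ]
        calc k * (γs - γ₀) ≤ k * γs := by nlinarith
          _ < 1 := by nlinarith
      have hneg : 1 / (γ₀ - γs) + k < 0 := by rw [hu]; linarith
      refine ⟨-(1 / (γ₀ - γs) + k), by linarith, fun t ht => ?_⟩
      have he0 : 0 < Real.exp (-2 * r * t) := Real.exp_pos _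
      have hd : 1 / (γ₀ - γs) + k * (1 - Real.exp (-2 * r * t)) ≤ 1 / (γ₀ - γs) + k := by
        nlinarith
      rw [abs_of_neg (by linarith)]
      linarith
    · -- γ₀ > γs
      have hδ : 0 < γ₀ - γs := by linarith
      refine ⟨1 / (γ₀ - γs), by positivity, fun t ht => ?_⟩
      have he1 : Real.exp (-2 * r * t) ≤ 1 := by
        apply Real.exp_le_one_iff.2; nlinarith
      have hd : 1 / (γ₀ - γs) ≤ 1 / (γ₀ - γs) + k * (1 - Real.exp (-2 * r * t)) := by
        nlinarith
      have hpos : 0 < 1 / (γ₀ - γs) + k * (1 - Real.exp (-2 * r * t)) :=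
        lt_of_lt_of_le (by positivity) hd
      rw [abs_of_pos hpos]
      exact hd
  obtain ⟨m, hm0, hm⟩ := key
  have hbound : ∀ t : ℝ, 0 ≤ t → |γ t - γs| ≤ m⁻¹ * Real.exp (-2 * r * t) := by
    intro t ht
    rw [hγ t]
    have he0 : 0 < Real.exp (-2 * r * t) := Real.exp_pos _
    have h1 : Real.exp (-2 * r * t) *
        (1 / (γ₀ - γs) + f ^ 2 / (2 * r * σ ^ 2) * (1 - Real.exp (-2 * r * t)))⁻¹ + γs - γs
        = Real.exp (-2 * r * t) *
        (1 / (γ₀ - γs) + k * (1 - Real.exp (-2 * r * t)))⁻¹ := by rw [← hk]; ring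
    rw [h1, abs_mul, abs_of_pos he0, abs_inv, mul_comm]
    exact mul_le_mul_of_nonneg_right (inv_anti₀ hm0 (hm t ht)) he0.le
  have hC : 0 < m⁻¹ := by positivity
  have hexp : Filter.Tendsto (fun t : ℝ => Real.exp (-2 * r * t)) Filter.atTop (nhds 0) := by
    have h1 : Filter.Tendsto (fun t : ℝ => (2 * r) * t) Filter.atTop Filter.atTop :=
      Filter.Tendsto.const_mul_atTop (by linarith) Filter.tendsto_id
    have h2 := (Real.tendsto_exp_neg_atTop_nhds_zero).comp h1
    have heq : (fun t : ℝ => Real.exp (-2 * r * t))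
        = (fun x : ℝ => Real.exp (-x)) ∘ (fun t : ℝ => (2 * r) * t) := by
      funext t
      simp only [Function.comp]
      rw [show (-2 * r * t : ℝ) = -((2 * r) * t) by ring]
    rw [heq]
    exact h2
  refine ⟨⟨m⁻¹, hC, hbound⟩, ?_⟩
  rw [tendsto_iff_dist_tendsto_zero]
  apply squeeze_zero' (Filter.Eventually.of_forall fun t => dist_nonneg)
    ((Filter.eventually_ge_atTop 0).mono fun t ht => ?_) (by simpa using hexp.const_mul m⁻¹)
  rw [Real.dist_eq, show (-(2 * r * t) : ℝ) = -2 * r * t by ring]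
  exact hbound t ht
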